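/- Let A be a commutative ring and S = A[t_1,...,t_d] graded with each t_i in degree 1. The graded dual D(M) of a graded S-module M, defined by D(M)_k = Hom_A(M_{-k}, A) with S-action (s·φ)(m) = φ(s·m), is a contravariant functor on graded S-modules, and there is a natural isomorphism of graded S-modules H^d_I(S) ≅ A ⊗_A D(S(-d)), i.e., the degree-k piece of H^d_I(S) is naturally isomorphic to Hom_A(S_{-k-d}, A). -/

import Mathlib

/-!
STATEMENT 2: Let `A` be a commutative ring and `S = A[t_1,…,t_d]` graded with each `t_i` in
degree 1.  The graded dual `D(M)` of a graded `S`-module `M`, defined by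
`D(M)_k = Hom_A(M_{-k}, A)` with `S`-action `(s·φ)(m) = φ(s·m)`, makes
`⊕_k Hom_A(S_{-k-d}, A) = D(S(-d))` a graded `S`-module, and there is a natural isomorphism of
graded `S`-modules `H^d_I(S) ≅ D(S(-d))`: the degree-`k` piece of `H^d_I(S)` is naturally
isomorphic to `Hom_A(S_{-k-d}, A)`.

Formalization: `H^d_I(S)` is computed from the top of the Čech complex on `t_1,…,t_d` as in
Statement 0.  The isomorphism is given degreewise by `A`-linear isomorphisms
`e k : H^d_I(S)_k ≅ Hom_A(S_{-k-d}, A)`; that it is an isomorphism of graded `S`-modules, where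
the `S`-action on the dual side is `(s·φ)(m) = φ(s·m)` (contravariantly, i.e. `D` is a
contravariant functor in its argument), is expressed by the compatibility with multiplication
by each generator `t_i`: `e (k+1) (t_i • x) (G) = e k (x) (t_i * G)`.
-/

open MvPolynomial

noncomputable section

variable (A : Type) [CommRing A] (d : ℕ)

/-- `t_1 ⋯ t_d`. -/
def prodAll : MvPolynomial (Fin d) A := ∏ i, X i

/-- `t_1 ⋯ t_{i-1} t_{i+1} ⋯ t_d`. -/
def prodHat (i : Fin d) : MvPolynomial (Fin d) A := ∏ j ∈ Finset.univ.erase i, X j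

/-- The top term `S[(t_1⋯t_d)^{-1}]` of the Čech complex. -/
abbrev LTop := Localization.Away (prodAll A d)

theorem prodHat_isUnit (i : Fin d) :
    IsUnit (algebraMap (MvPolynomial (Fin d) A) (LTop A d) (prodHat A d i)) := by
  have h : prodHat A d i * X i = prodAll A d := by
    rw [prodHat, prodAll, Finset.prod_erase_mul _ _ (Finset.mem_univ i)]
  have hu : IsUnit (algebraMap (MvPolynomial (Fin d) A) (LTop A d) (prodAll A d)) :=
    IsLocalization.Away.algebraMap_isUnit (prodAll A d)
  have hu2 : IsUnit (algebraMap (MvPolynomial (Fin d) A) (LTop A d) (prodHat A d i) *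
      algebraMap (MvPolynomial (Fin d) A) (LTop A d) (X i)) := by
    rw [← map_mul, h]; exact hu
  exact isUnit_of_mul_isUnit_left hu2

/-- The `i`-th component of the last Čech differential. -/
def cechTopMap (i : Fin d) : Localization.Away (prodHat A d i) →+* LTop A d :=
  Localization.awayLift (algebraMap _ _) (prodHat A d i) (prodHat_isUnit A d i)

/-- The image of the last Čech differential. -/
def cechImage : Submodule (MvPolynomial (Fin d) A) (LTop A d) :=
  Submodule.span _ (⋃ i : Fin d, Set.range (cechTopMap A d i))

/-- `H^d_I(S)`, the cokernel. -/
abbrev TopLocalCohomology := LTop A d ⧸ cechImage A d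

/-- The element `F/(t_1⋯t_d)^m`. -/
def frac (F : MvPolynomial (Fin d) A) (m : ℕ) : LTop A d :=
  Localization.mk F ⟨prodAll A d ^ m, Submonoid.pow_mem _ (Submonoid.mem_powers _) m⟩

/-- The degree-`k` graded piece of `S[(t_1⋯t_d)^{-1}]`. -/
def LTopDeg (k : ℤ) : Submodule A (LTop A d) :=
  Submodule.span A
    {x | ∃ (m e : ℕ) (F : MvPolynomial (Fin d) A), (e : ℤ) = k + d * m ∧
      F ∈ homogeneousSubmodule (Fin d) A e ∧ x = frac A d F m}

/-- The degree-`k` graded piece `H^d_I(S)_k`. -/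
def HTopDeg (k : ℤ) : Submodule A (TopLocalCohomology A d) :=
  (LTopDeg A d k).map ((cechImage A d).mkQ.restrictScalars A)

/-- The degree-`j` graded piece `S_j` of `S`, for `j : ℤ`. -/
def SDeg (j : ℤ) : Submodule A (MvPolynomial (Fin d) A) :=
  if h : 0 ≤ j then homogeneousSubmodule (Fin d) A j.toNat else ⊥

/-! ### Auxiliary development -/

open Finsupp in
/-- The exponent vector `(1,…,1)`. -/
def oneExp : Fin d →₀ ℕ := ∑ i, Finsupp.single i 1

/-- The exponent vector of `prodHat i`. -/
def hatExp (i : Fin d) : Fin d →₀ ℕ := ∑ j ∈ Finset.univ.erase i, Finsupp.single j 1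

lemma oneExp_apply (j : Fin d) : oneExp d j = 1 := by
  classical
  rw [oneExp, Finset.sum_apply']
  simp [Finsupp.single_apply]

lemma hatExp_apply (i j : Fin d) : hatExp d i j = if j = i then 0 else 1 := by
  classical
  rw [hatExp, Finset.sum_apply']
  simp only [Finsupp.single_apply]
  by_cases h : j = i
  · subst h
    rw [Finset.sum_eq_zero, if_pos rfl]
    intro x hx
    rw [if_neg]
    exact fun hxj => (Finset.mem_erase.mp hx).1 (hxj)
  · rw [if_neg h, Finset.sum_ite_eq' (Finset.univ.erase i) j (fun _ => (1:ℕ)),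
      if_pos (Finset.mem_erase.mpr ⟨h, Finset.mem_univ j⟩)]

lemma hatExp_add_single (i : Fin d) : hatExp d i + Finsupp.single i 1 = oneExp d := by
  rw [hatExp, oneExp, Finset.sum_erase_add _ _ (Finset.mem_univ i)]

lemma degree_eq_sum (b : Fin d →₀ ℕ) : b.degree = ∑ j, b j :=
  Finset.sum_subset (Finset.subset_univ _) (fun j _ hj => Finsupp.notMem_support_iff.mp hj)

lemma degree_oneExp : (oneExp d).degree = d := by
  rw [degree_eq_sum]
  simp [oneExp_apply]

lemma prod_X_eq (s : Finset (Fin d)) :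
    (∏ i ∈ s, (X i : MvPolynomial (Fin d) A)) = monomial (∑ i ∈ s, Finsupp.single i 1) 1 := by
  classical
  induction s using Finset.induction_on with
  | empty => simp
  | @insert a s hnot ih =>
      rw [Finset.prod_insert hnot, Finset.sum_insert hnot, ih,
        show (X a : MvPolynomial (Fin d) A) = monomial (Finsupp.single a 1) 1 by
          rw [← pow_one (X a : MvPolynomial (Fin d) A), X_pow_eq_monomial],
        monomial_mul, one_mul]

lemma prodAll_eq : prodAll A d = monomial (oneExp d) 1 := prod_X_eq A d _

lemma prodHat_eq (i : Fin d) : prodHat A d i = monomial (hatExp d i) 1 := prod_X_eq A d _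

lemma prodAll_pow (m : ℕ) : prodAll A d ^ m = monomial (m • oneExp d) 1 := by
  rw [prodAll_eq, monomial_pow, one_pow]

lemma prodHat_mul_X (i : Fin d) : prodHat A d i * X i = prodAll A d := by
  rw [prodHat, prodAll, Finset.prod_erase_mul _ _ (Finset.mem_univ i)]

/-- The exponent of a monomial. -/
def expOf (s : MvPolynomial (Fin d) A) : Fin d →₀ ℕ := ∑ b ∈ s.support, b

lemma expOf_pow [Nontrivial A] (m : ℕ) : expOf A d (prodAll A d ^ m) = m • oneExp d := by
  classical
  rw [expOf, prodAll_pow, support_monomial, if_neg (one_ne_zero : (1:A) ≠ 0),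
    Finset.sum_singleton]

lemma coeff_shift (n : ℕ) (b : Fin d →₀ ℕ) (F : MvPolynomial (Fin d) A) :
    coeff (n • oneExp d + b) (prodAll A d ^ n * F) = coeff b F := by
  rw [prodAll_pow, coeff_monomial_mul, one_mul]

/-- The degree `(-1,…,-1)` coefficient functional, on fractions. -/
def cfun (F : MvPolynomial (Fin d) A) (s : Submonoid.powers (prodAll A d)) : A :=
  coeff (expOf A d s.1) (prodAll A d * F)

lemma cfun_wd {F F' : MvPolynomial (Fin d) A} {s s' : Submonoid.powers (prodAll A d)}
    (h : Localization.r (Submonoid.powers (prodAll A d)) (F, s) (F', s')) :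
    cfun A d F s = cfun A d F' s' := by
  nontriviality A
  obtain ⟨u, hu⟩ := Localization.r_iff_exists.mp h
  obtain ⟨p, hp⟩ := u.2
  obtain ⟨m, hm⟩ := s.2
  obtain ⟨n, hn⟩ := s'.2
  rw [← hp, ← hm, ← hn] at hu
  have key : prodAll A d ^ (p+n) * (prodAll A d * F)
      = prodAll A d ^ (p+m) * (prodAll A d * F') := by
    calc prodAll A d ^ (p+n) * (prodAll A d * F)
        = prodAll A d * (prodAll A d ^ p * (prodAll A d ^ n * F)) := by ring
      _ = prodAll A d * (prodAll A d ^ p * (prodAll A d ^ m * F')) := by rw [hu]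
      _ = prodAll A d ^ (p+m) * (prodAll A d * F') := by ring
  have hidx : (p+n) • oneExp d + m • oneExp d = (p+m) • oneExp d + n • oneExp d := by
    rw [add_nsmul, add_nsmul]
    abel
  rw [cfun, cfun, ← hm, ← hn, expOf_pow, expOf_pow,
    ← coeff_shift A d (p+n) (m • oneExp d) (prodAll A d * F), key, hidx,
    coeff_shift]

/-- The coefficient functional on the top Čech module. -/
def c0 (x : LTop A d) : A := Localization.liftOn x (cfun A d) (fun h => cfun_wd A d h)

lemma c0_mk (F : MvPolynomial (Fin d) A) (m : ℕ) (h) :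
    c0 A d (Localization.mk F ⟨prodAll A d ^ m, h⟩) = coeff (m • oneExp d) (prodAll A d * F) := by
  nontriviality A
  rw [c0, Localization.liftOn_mk, cfun, expOf_pow]

lemma c0_frac (F : MvPolynomial (Fin d) A) (m : ℕ) :
    c0 A d (frac A d F m) = coeff (m • oneExp d) (prodAll A d * F) := c0_mk A d F m _

lemma denom_eq (s : Submonoid.powers (prodAll A d)) :
    ∃ m : ℕ, s = ⟨prodAll A d ^ m, Submonoid.pow_mem _ (Submonoid.mem_powers _) m⟩ := by
  obtain ⟨m, hm⟩ := s.2
  exact ⟨m, Subtype.ext hm.symm⟩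

lemma c0_add (x y : LTop A d) : c0 A d (x + y) = c0 A d x + c0 A d y := by
  refine Localization.induction_on₂ x y ?_
  rintro ⟨F, s⟩ ⟨G, t⟩
  obtain ⟨m, rfl⟩ := denom_eq A d s
  obtain ⟨n, rfl⟩ := denom_eq A d t
  rw [Localization.add_mk]
  have hd : ((⟨prodAll A d ^ m, Submonoid.pow_mem _ (Submonoid.mem_powers _) m⟩ :
      Submonoid.powers (prodAll A d)) * ⟨prodAll A d ^ n, Submonoid.pow_mem _ (Submonoid.mem_powers _) n⟩)
      = (⟨prodAll A d ^ (m+n), Submonoid.pow_mem _ (Submonoid.mem_powers _) (m+n)⟩ :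
        Submonoid.powers (prodAll A d)) := Subtype.ext (pow_add _ _ _).symm
  rw [hd, c0_mk, c0_mk, c0_mk]
  have h1 : prodAll A d * (prodAll A d ^ m * G + prodAll A d ^ n * F)
      = prodAll A d ^ m * (prodAll A d * G) + prodAll A d ^ n * (prodAll A d * F) := by ring
  rw [h1, coeff_add, add_nsmul, coeff_shift, add_comm (m • oneExp d), coeff_shift, add_comm]

lemma c0_smul (a : A) (x : LTop A d) : c0 A d (a • x) = a * c0 A d x := by
  refine Localization.induction_on x ?_
  rintro ⟨F, s⟩
  obtain ⟨m, rfl⟩ := denom_eq A d s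
  rw [Localization.smul_mk, c0_mk, c0_mk, mul_smul_comm, coeff_smul, smul_eq_mul]

/-- `c0` as a linear map. -/
def cL : LTop A d →ₗ[A] A where
  toFun := c0 A d
  map_add' := c0_add A d
  map_smul' := c0_smul A d

/-! ### `frac` manipulation -/

lemma frac_zero (m : ℕ) : frac A d 0 m = 0 := Localization.mk_zero _

lemma frac_add (F F' : MvPolynomial (Fin d) A) (m : ℕ) :
    frac A d F m + frac A d F' m = frac A d (F + F') m := Localization.add_mk_self _ _ _

lemma frac_sum {ι : Type*} (s : Finset ι) (f : ι → MvPolynomial (Fin d) A) (m : ℕ) :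
    frac A d (∑ b ∈ s, f b) m = ∑ b ∈ s, frac A d (f b) m := by
  classical
  induction s using Finset.induction_on with
  | empty => simp [frac_zero]
  | @insert a s hnot ih =>
      rw [Finset.sum_insert hnot, Finset.sum_insert hnot, ← ih, frac_add]

lemma smul_frac (G F : MvPolynomial (Fin d) A) (m : ℕ) :
    G • frac A d F m = frac A d (G * F) m := by
  rw [frac, frac, Localization.smul_mk, smul_eq_mul]

lemma asmul_frac (a : A) (F : MvPolynomial (Fin d) A) (m : ℕ) :
    a • frac A d F m = frac A d (a • F) m := by
  rw [frac, frac, Localization.smul_mk]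

lemma frac_eq {F F' : MvPolynomial (Fin d) A} {m m' : ℕ}
    (h : prodAll A d ^ m' * F = prodAll A d ^ m * F') : frac A d F m = frac A d F' m' := by
  rw [frac, frac, Localization.mk_eq_mk_iff]
  exact Localization.r_iff_exists.mpr ⟨1, by simpa using h⟩

lemma frac_zero_denom (F : MvPolynomial (Fin d) A) :
    frac A d F 0 = algebraMap (MvPolynomial (Fin d) A) (LTop A d) F := by
  rw [frac, ← Localization.mk_one_eq_algebraMap]
  congr 1

lemma frac_mul_alg (F G : MvPolynomial (Fin d) A) (m : ℕ) :
    frac A d F m * algebraMap (MvPolynomial (Fin d) A) (LTop A d) G = frac A d (F * G) m := by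
  rw [frac, frac, ← Localization.mk_one_eq_algebraMap, Localization.mk_mul, mul_one]

lemma smul_eq_algS (G : MvPolynomial (Fin d) A) (x : LTop A d) :
    G • x = algebraMap (MvPolynomial (Fin d) A) (LTop A d) G * x := by
  refine Localization.induction_on x ?_
  rintro ⟨F, s⟩
  rw [Localization.smul_mk, ← Localization.mk_one_eq_algebraMap, Localization.mk_mul, smul_eq_mul]
  congr 1
  exact (one_mul s).symm

lemma C_smul' (a : A) (x : LTop A d) : (C a : MvPolynomial (Fin d) A) • x = a • x := by
  refine Localization.induction_on x ?_
  rintro ⟨F, s⟩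
  rw [Localization.smul_mk, Localization.smul_mk]
  congr 1
  rw [smul_eq_mul, MvPolynomial.smul_eq_C_mul]

lemma smul_comm' (G : MvPolynomial (Fin d) A) (a : A) (x : LTop A d) :
    G • a • x = a • (G • x) := by
  refine Localization.induction_on x ?_
  rintro ⟨F, s⟩
  rw [Localization.smul_mk, Localization.smul_mk, Localization.smul_mk, Localization.smul_mk]
  congr 1
  rw [smul_eq_mul, smul_eq_mul, mul_smul_comm]

/-! ### The pairing -/

/-- The pairing `x ↦ (G ↦ c(G • x))`. -/
def P : LTop A d →ₗ[A] (MvPolynomial (Fin d) A →ₗ[A] A) where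
  toFun x :=
    { toFun := fun G => cL A d (G • x)
      map_add' := fun G G' => by
        show cL A d ((G + G') • x) = cL A d (G • x) + cL A d (G' • x)
        rw [smul_eq_algS, smul_eq_algS, smul_eq_algS, map_add, add_mul, map_add]
      map_smul' := fun a G => by
        show cL A d ((a • G) • x) = a • cL A d (G • x)
        rw [smul_eq_algS, smul_eq_algS, MvPolynomial.smul_eq_C_mul,
          RingHom.map_mul (algebraMap (MvPolynomial (Fin d) A) (LTop A d)), mul_assoc,
          ← smul_eq_algS, C_smul', map_smul] }
  map_add' x y := by
    refine LinearMap.ext fun G => ?_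
    show cL A d (G • (x + y)) = cL A d (G • x) + cL A d (G • y)
    rw [smul_add, map_add]
  map_smul' a x := by
    refine LinearMap.ext fun G => ?_
    show cL A d (G • a • x) = a • cL A d (G • x)
    rw [smul_comm', map_smul]

lemma cL_apply (x : LTop A d) : cL A d x = c0 A d x := rfl

lemma P_apply (x : LTop A d) (G : MvPolynomial (Fin d) A) :
    P A d x G = cL A d (G • x) := rfl

lemma P_frac (F G : MvPolynomial (Fin d) A) (m : ℕ) :
    P A d (frac A d F m) G = coeff (m • oneExp d) (prodAll A d * (G * F)) := by
  rw [P_apply, smul_frac, cL_apply]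
  exact c0_frac A d _ m

lemma alg_pow_isUnit (m : ℕ) :
    IsUnit (algebraMap (MvPolynomial (Fin d) A) (LTop A d) (prodAll A d ^ m)) := by
  rw [map_pow]
  exact (IsLocalization.Away.algebraMap_isUnit (prodAll A d)).pow m

lemma frac_mul_denom (F : MvPolynomial (Fin d) A) (m : ℕ) :
    frac A d F m * algebraMap (MvPolynomial (Fin d) A) (LTop A d) (prodAll A d ^ m)
      = algebraMap (MvPolynomial (Fin d) A) (LTop A d) F := by
  rw [frac_mul_alg, ← frac_zero_denom]
  refine frac_eq A d ?_
  ring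

lemma P_vanish (x : LTop A d) (hx : x ∈ cechImage A d) : P A d x = 0 := by
  refine Submodule.span_induction ?_ ?_ ?_ ?_ hx
  · rintro y hy
    obtain ⟨i, hU⟩ := Set.mem_iUnion.mp hy
    obtain ⟨w, rfl⟩ := hU
    obtain ⟨⟨Fy, t⟩, hsur⟩ := IsLocalization.surj (Submonoid.powers (prodHat A d i)) w
    obtain ⟨n, hn0⟩ := t.2
    have hn : prodHat A d i ^ n = (t : MvPolynomial (Fin d) A) := hn0
    have E : cechTopMap A d i w
        * algebraMap (MvPolynomial (Fin d) A) (LTop A d) (prodHat A d i ^ n)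
        = algebraMap (MvPolynomial (Fin d) A) (LTop A d) Fy := by
      have h2 := congrArg (cechTopMap A d i) hsur
      rw [map_mul] at h2
      simp only at h2
      rw [← hn] at h2
      rw [cechTopMap] at h2 ⊢
      rwa [IsLocalization.Away.lift_eq, IsLocalization.Away.lift_eq] at h2
    refine LinearMap.ext fun G => ?_
    have key : G • cechTopMap A d i w = frac A d (G * Fy * X i ^ n) n := by
      refine (alg_pow_isUnit A d n).mul_right_cancel ?_
      rw [frac_mul_denom]
      have hsplit : prodAll A d ^ n = prodHat A d i ^ n * X i ^ n := by
        rw [← mul_pow, prodHat_mul_X]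
      rw [smul_eq_algS, hsplit, map_mul, map_mul, map_mul]
      calc algebraMap (MvPolynomial (Fin d) A) (LTop A d) G * cechTopMap A d i w
            * (algebraMap (MvPolynomial (Fin d) A) (LTop A d) (prodHat A d i ^ n)
              * algebraMap (MvPolynomial (Fin d) A) (LTop A d) (X i ^ n))
          = algebraMap (MvPolynomial (Fin d) A) (LTop A d) G
            * (cechTopMap A d i w
              * algebraMap (MvPolynomial (Fin d) A) (LTop A d) (prodHat A d i ^ n))
            * algebraMap (MvPolynomial (Fin d) A) (LTop A d) (X i ^ n) := by ring
        _ = _ := by rw [E, ← map_mul, ← map_mul]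
    rw [LinearMap.zero_apply, P_apply, key, cL_apply, c0_frac]
    have hre : prodAll A d * (G * Fy * X i ^ n)
        = monomial (Finsupp.single i (n+1)) 1 * (prodHat A d i * G * Fy) := by
      rw [← X_pow_eq_monomial, ← prodHat_mul_X A d i]
      ring
    rw [hre, coeff_monomial_mul', if_neg]
    intro hle
    have h3 := hle i
    simp [Finsupp.single_apply, oneExp_apply] at h3
  · exact map_zero _
  · intro x y _ _ hx hy
    rw [map_add, hx, hy, add_zero]
  · intro s x _ hPx
    refine LinearMap.ext fun G => ?_
    rw [LinearMap.zero_apply, P_apply, smul_eq_algS, smul_eq_algS, ← mul_assoc, ← map_mul,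
      ← smul_eq_algS, ← P_apply, hPx, LinearMap.zero_apply]

/-! ### Degree arithmetic -/

lemma degree_add' (u v : Fin d →₀ ℕ) : (u + v).degree = u.degree + v.degree := by
  rw [degree_eq_sum, degree_eq_sum, degree_eq_sum, ← Finset.sum_add_distrib]
  simp

lemma degree_nsmul (m : ℕ) (u : Fin d →₀ ℕ) : (m • u).degree = m * u.degree := by
  rw [degree_eq_sum, degree_eq_sum, Finset.mul_sum]
  simp

lemma prodAll_isHomogeneous : (prodAll A d).IsHomogeneous d := by
  rw [prodAll_eq]
  exact isHomogeneous_monomial _ (degree_oneExp d)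

lemma mem_homog_degree {F : MvPolynomial (Fin d) A} {e : ℕ}
    (hF : F ∈ homogeneousSubmodule (Fin d) A e) {b : Fin d →₀ ℕ} (hb : b ∈ F.support) :
    b.degree = e := by
  by_contra h
  exact (MvPolynomial.mem_support_iff.mp hb) (hF.coeff_eq_zero h)

/-! ### Monomials with a large exponent die in the quotient -/

lemma mon_mem (b : Fin d →₀ ℕ) (a : A) (m : ℕ) (i : Fin d) (hm : m ≤ b i) :
    frac A d (monomial b a) m ∈ cechImage A d := by
  classical
  set b' := b - Finsupp.single i m with hb'
  set w := Localization.mk (monomial b' a)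
    (⟨prodHat A d i ^ m, Submonoid.pow_mem _ (Submonoid.mem_powers _) m⟩ :
      Submonoid.powers (prodHat A d i)) with hw
  have hunit : IsUnit (algebraMap (MvPolynomial (Fin d) A) (LTop A d) (prodHat A d i ^ m)) := by
    rw [map_pow]
    exact (prodHat_isUnit A d i).pow m
  have h1 : cechTopMap A d i w
      * algebraMap (MvPolynomial (Fin d) A) (LTop A d) (prodHat A d i ^ m)
      = algebraMap (MvPolynomial (Fin d) A) (LTop A d) (monomial b' a) := by
    have h0 : w * algebraMap (MvPolynomial (Fin d) A) (Localization.Away (prodHat A d i))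
        (prodHat A d i ^ m)
        = algebraMap (MvPolynomial (Fin d) A) _ (monomial b' a) := by
      rw [hw, Localization.mk_eq_mk']
      exact IsLocalization.mk'_spec _ _ _
    have h2 := congrArg (cechTopMap A d i) h0
    rw [map_mul, cechTopMap, IsLocalization.Away.lift_eq, IsLocalization.Away.lift_eq] at h2
    rw [cechTopMap]
    exact h2
  have h2 : frac A d (monomial b a) m
      * algebraMap (MvPolynomial (Fin d) A) (LTop A d) (prodHat A d i ^ m)
      = algebraMap (MvPolynomial (Fin d) A) (LTop A d) (monomial b' a) := by
    rw [frac_mul_alg, ← frac_zero_denom]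
    refine frac_eq A d ?_
    rw [pow_zero, one_mul, prodHat_eq, prodAll_pow, monomial_pow, one_pow, monomial_mul,
      monomial_mul, mul_one, one_mul]
    have hexp : b + m • hatExp d i = m • oneExp d + b' := by
      ext j
      rcases eq_or_ne j i with rfl | hj
      · simp only [Finsupp.add_apply, Finsupp.smul_apply, hatExp_apply, oneExp_apply, hb',
          Finsupp.tsub_apply, Finsupp.single_eq_same, smul_eq_mul, eq_self_iff_true, if_true]
        omega
      · simp only [Finsupp.add_apply, Finsupp.smul_apply, hatExp_apply, if_neg hj,
          smul_eq_mul, mul_one, oneExp_apply, hb', Finsupp.tsub_apply,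
          Finsupp.single_eq_of_ne' (fun h => hj h.symm)]
        omega
    rw [hexp]
  have hkey : cechTopMap A d i w = frac A d (monomial b a) m :=
    hunit.mul_right_cancel (h1.trans h2.symm)
  rw [← hkey]
  exact Submodule.subset_span (Set.mem_iUnion.mpr ⟨i, Set.mem_range_self w⟩)

/-! ### Representation of elements of `LTopDeg` -/

lemma LTopDeg_rep {k : ℤ} {y : LTop A d} (hy : y ∈ LTopDeg A d k) :
    y = 0 ∨ ∃ (m e : ℕ) (F : MvPolynomial (Fin d) A), 1 ≤ m ∧ (e:ℤ) = k + d*m ∧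
      F ∈ homogeneousSubmodule (Fin d) A e ∧ y = frac A d F m := by
  refine Submodule.span_induction ?_ ?_ ?_ ?_ hy
  · rintro x ⟨m, e, F, he, hF, rfl⟩
    right
    rcases Nat.eq_zero_or_pos m with hm | hm
    · subst hm
      refine ⟨1, e + d, prodAll A d * F, le_refl 1, ?_, ?_, ?_⟩
      · push_cast
        rw [he]
        push_cast
        ring
      · exact (add_comm d e) ▸ ((prodAll_isHomogeneous A d).mul hF)
      · refine frac_eq A d ?_
        ring
    · exact ⟨m, e, F, hm, he, hF, rfl⟩
  · left
    rfl
  · rintro x y _ _ hx' hy'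
    rcases hx' with rfl | ⟨m, e, F, hm, he, hF, rfl⟩
    · rwa [zero_add]
    rcases hy' with rfl | ⟨m', e', F', hm', he', hF', rfl⟩
    · right
      exact ⟨m, e, F, hm, he, hF, by rw [add_zero]⟩
    right
    refine ⟨m + m', e + d*m', prodAll A d ^ m' * F + prodAll A d ^ m * F', by omega, ?_, ?_, ?_⟩
    · push_cast
      rw [he]
      ring
    · apply Submodule.add_mem
      · exact (add_comm (d*m') e) ▸ (((prodAll_isHomogeneous A d).pow m').mul hF)
      · have hEq : d*m + e' = e + d*m' := by
          have hc : ((d*m + e' : ℕ) : ℤ) = ((e + d*m' : ℕ) : ℤ) := by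
            push_cast
            rw [he, he']
            ring
          exact_mod_cast hc
        exact hEq ▸ (((prodAll_isHomogeneous A d).pow m).mul hF')
    · have e1 : frac A d F m = frac A d (prodAll A d ^ m' * F) (m+m') :=
        frac_eq A d (by ring)
      have e2 : frac A d F' m' = frac A d (prodAll A d ^ m * F') (m+m') :=
        frac_eq A d (by ring)
      rw [e1, e2, frac_add]
  · rintro a x _ hx'
    rcases hx' with rfl | ⟨m, e, F, hm, he, hF, rfl⟩
    · left
      rw [smul_zero]
    · right
      exact ⟨m, e, a • F, hm, he, Submodule.smul_mem _ a hF, asmul_frac A d a F m⟩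

/-! ### The pairing on the quotient -/

/-- The pairing, descended to the quotient. -/
def Pbar : TopLocalCohomology A d →ₗ[A] (MvPolynomial (Fin d) A →ₗ[A] A) :=
  (Submodule.liftQ ((cechImage A d).restrictScalars A) (P A d)
    (fun x hx => P_vanish A d x hx)).comp
    (Submodule.Quotient.restrictScalarsEquiv A (cechImage A d)).symm.toLinearMap

lemma Pbar_mk (y : LTop A d) :
    Pbar A d (Submodule.Quotient.mk y) = P A d y := by
  rw [Pbar, LinearMap.comp_apply, LinearEquiv.coe_toLinearMap,
    Submodule.Quotient.restrictScalarsEquiv_symm_mk]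
  rfl

lemma Pbar_smul (s : MvPolynomial (Fin d) A) (x : TopLocalCohomology A d)
    (G : MvPolynomial (Fin d) A) :
    Pbar A d (s • x) G = Pbar A d x (s * G) := by
  obtain ⟨y, rfl⟩ := Submodule.Quotient.mk_surjective _ x
  rw [← Submodule.Quotient.mk_smul, Pbar_mk, Pbar_mk, P_apply, P_apply, smul_eq_algS,
    smul_eq_algS, smul_eq_algS, ← mul_assoc, ← map_mul, mul_comm G s]

/-- The degreewise pairing map. -/
def eAux (k : ℤ) : HTopDeg A d k →ₗ[A] (SDeg A d (-k - d) →ₗ[A] A) :=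
  (LinearMap.lcomp A A (Submodule.subtype (SDeg A d (-k - d)))).comp
    ((Pbar A d).comp (Submodule.subtype (HTopDeg A d k)))

lemma eAux_apply (k : ℤ) (x : HTopDeg A d k) (G : SDeg A d (-k - d)) :
    eAux A d k x G = Pbar A d x.1 G.1 := rfl

/-! ### Injectivity -/

lemma support_large_of_pairing_zero {k : ℤ} {m e : ℕ} {F : MvPolynomial (Fin d) A}
    (he : (e:ℤ) = k + d*m) (hF : F ∈ homogeneousSubmodule (Fin d) A e)
    (hvan : ∀ G ∈ SDeg A d (-k-d), coeff (m • oneExp d) (prodAll A d * (G * F)) = 0)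
    (b : Fin d →₀ ℕ) (hb : b ∈ F.support) : ∃ i, m ≤ b i := by
  by_contra hno
  push_neg at hno
  have hdb : b.degree = e := mem_homog_degree A d hF hb
  have hble : b + oneExp d ≤ m • oneExp d := by
    rw [Finsupp.le_def]
    intro j
    have := hno j
    simp only [Finsupp.add_apply, oneExp_apply, Finsupp.smul_apply, smul_eq_mul, mul_one]
    omega
  set g := m • oneExp d - (b + oneExp d) with hgdef
  have hg : g + (b + oneExp d) = m • oneExp d := tsub_add_cancel_of_le hble
  have hdeg : (g.degree : ℤ) = -k - d := by
    have h1 := congrArg Finsupp.degree hg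
    rw [degree_add', degree_add', degree_oneExp, degree_nsmul, degree_oneExp, hdb] at h1
    have h2 : (g.degree : ℤ) + ((e:ℤ) + d) = (m:ℤ) * d := by exact_mod_cast h1
    have h3 : (m:ℤ) * d = (d:ℤ) * m := mul_comm _ _
    linarith [he]
  have h0le : (0:ℤ) ≤ -k - d := hdeg ▸ Int.natCast_nonneg g.degree
  have hGmem : (monomial g (1:A)) ∈ SDeg A d (-k-d) := by
    rw [SDeg, dif_pos h0le]
    refine isHomogeneous_monomial _ ?_
    have h4 : (((-k-d).toNat : ℤ)) = -k-d := Int.toNat_of_nonneg h0le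
    omega
  have hv := hvan _ hGmem
  rw [prodAll_eq, ← mul_assoc, monomial_mul, one_mul] at hv
  rw [coeff_monomial_mul', if_pos, one_mul] at hv
  · apply MvPolynomial.mem_support_iff.mp hb
    rw [← hv]
    congr 1
    ext j
    have hgj := DFunLike.congr_fun hg j
    simp only [Finsupp.add_apply, oneExp_apply, Finsupp.smul_apply, smul_eq_mul, mul_one,
      Finsupp.tsub_apply, Finsupp.coe_add, Pi.add_apply] at hgj ⊢
    omega
  · rw [Finsupp.le_def]
    intro j
    have hgj := DFunLike.congr_fun hg j
    simp only [Finsupp.add_apply, oneExp_apply, Finsupp.smul_apply, smul_eq_mul, mul_one,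
      Finsupp.tsub_apply, Finsupp.coe_add, Pi.add_apply] at hgj ⊢
    omega

lemma eAux_injective (k : ℤ) : Function.Injective (eAux A d k) := by
  refine (injective_iff_map_eq_zero _).mpr ?_
  rintro ⟨x, hx⟩ h0
  obtain ⟨y, hy, rfl⟩ := Submodule.mem_map.mp hx
  rcases LTopDeg_rep A d hy with rfl | ⟨m, e, F, hm, he, hF, rfl⟩
  · exact Subtype.ext (map_zero _)
  · refine Subtype.ext ?_
    show Submodule.Quotient.mk (frac A d F m) = 0
    rw [Submodule.Quotient.mk_eq_zero]
    have hvan : ∀ G ∈ SDeg A d (-k-d), coeff (m • oneExp d) (prodAll A d * (G * F)) = 0 := by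
      intro G hG
      calc coeff (m • oneExp d) (prodAll A d * (G * F))
          = P A d (frac A d F m) G := (P_frac A d F G m).symm
        _ = Pbar A d (Submodule.Quotient.mk (frac A d F m)) G := by rw [Pbar_mk]
        _ = eAux A d k ⟨_, hx⟩ ⟨G, hG⟩ := rfl
        _ = 0 := by rw [h0]; rfl
    have hs : ∀ b ∈ F.support, ∃ i, m ≤ b i :=
      support_large_of_pairing_zero A d he hF hvan
    have hrw : frac A d F m = ∑ b ∈ F.support, frac A d (monomial b (coeff b F)) m := by
      conv_lhs => rw [F.as_sum]
      exact frac_sum A d _ _ m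
    rw [hrw]
    refine Submodule.sum_mem _ (fun b hb => ?_)
    obtain ⟨i, hi⟩ := hs b hb
    exact mon_mem A d b _ m i hi

/-! ### Surjectivity -/

lemma eAux_surjective (k : ℤ) : Function.Surjective (eAux A d k) := by
  classical
  intro lam
  by_cases hE : (0:ℤ) ≤ -k - d
  swap
  · refine ⟨0, LinearMap.ext fun v => ?_⟩
    obtain ⟨G, hG⟩ := v
    have hG0 : G = 0 := by
      have h := hG
      rw [SDeg, dif_neg hE] at h
      simpa using h
    subst hG0
    have hv : (⟨0, hG⟩ : SDeg A d (-k - d)) = 0 := rfl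
    rw [hv, map_zero, map_zero]
  set e' := (-k-d).toNat with he'def
  have he'' : ((e' : ℤ)) = -k - d := Int.toNat_of_nonneg hE
  by_cases hdz : d = 0 ∧ e' ≠ 0
  · refine ⟨0, LinearMap.ext fun v => ?_⟩
    obtain ⟨G, hG⟩ := v
    have hG0 : G = 0 := by
      have h := hG
      rw [SDeg, dif_pos hE] at h
      by_contra hne
      obtain ⟨b, hb⟩ := (MvPolynomial.support_nonempty.mpr hne)
      have hbd := mem_homog_degree A d h hb
      have hb0 : b = 0 := by
        ext j
        exact Fin.elim0 (hdz.1 ▸ j)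
      rw [hb0, map_zero] at hbd
      exact hdz.2 hbd.symm
    subst hG0
    have hv : (⟨0, hG⟩ : SDeg A d (-k - d)) = 0 := rfl
    rw [hv, map_zero, map_zero]
  · push_neg at hdz
    set m := e' + 1 with hmdef
    set E2 := e' * (d - 1) with hE2def
    set Lam : MvPolynomial (Fin d) A →ₗ[A] A :=
      lam.comp ((homogeneousComponent e').codRestrict (SDeg A d (-k - d))
        (fun G => by rw [SDeg, dif_pos hE]; exact homogeneousComponent_mem e' G)) with hLamdef
    have hLam_mon : ∀ g : Fin d →₀ ℕ, g.degree ≠ e' → Lam (monomial g (1:A)) = 0 := by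
      intro g hgd
      have hz : homogeneousComponent e' (monomial g (1:A)) = 0 :=
        homogeneousComponent_eq_zero' _ _ (fun b hbmem => by
          rw [Finset.mem_singleton.mp (MvPolynomial.support_monomial_subset hbmem)]
          exact hgd)
      rw [hLamdef]
      simp only [LinearMap.comp_apply]
      have hcr : (homogeneousComponent e').codRestrict (SDeg A d (-k - d))
          (fun G => by rw [SDeg, dif_pos hE]; exact homogeneousComponent_mem e' G)
          (monomial g (1:A)) = 0 := by
        apply Subtype.ext
        rw [LinearMap.codRestrict_apply, hz]
        rfl
      rw [hcr, map_zero]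
    set F := ∑ b ∈ Finset.Iic (e' • oneExp d),
      Lam (monomial (e' • oneExp d - b) (1:A)) • monomial b (1:A) with hFdef
    have hcoeff : ∀ b, coeff b F =
        if b ≤ e' • oneExp d then Lam (monomial (e' • oneExp d - b) (1:A)) else 0 := by
      intro b
      rw [hFdef, MvPolynomial.coeff_sum]
      simp only [coeff_smul, coeff_monomial, smul_eq_mul, mul_ite, mul_one, mul_zero]
      rw [Finset.sum_ite_eq' (Finset.Iic (e' • oneExp d)) b
        (fun b' => Lam (monomial (e' • oneExp d - b') (1:A)))]
      simp [Finset.mem_Iic]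
    have harith : ∀ b : Fin d →₀ ℕ, b ≤ e' • oneExp d →
        ((e' • oneExp d - b).degree = e' ↔ b.degree = E2) := by
      intro b hble
      have hsum : (e' • oneExp d - b).degree + b.degree = e' * d := by
        rw [← degree_add', tsub_add_cancel_of_le hble, degree_nsmul, degree_oneExp]
      rcases Nat.eq_zero_or_pos d with hd0 | hd1
      · have he0 : e' = 0 := hdz hd0
        have hE20 : E2 = 0 := by rw [hE2def, he0, Nat.zero_mul]
        have h1 : e' * d = 0 := by rw [he0, Nat.zero_mul]
        omega
      · have hmul : e' * d = E2 + e' := by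
          have hd' : (d - 1) + 1 = d := by omega
          calc e' * d = e' * ((d-1)+1) := by rw [hd']
            _ = e' * (d-1) + e' := by rw [Nat.mul_add, Nat.mul_one]
            _ = E2 + e' := by rw [hE2def]
        constructor <;> intro hh <;> omega
    have hFhom : F ∈ homogeneousSubmodule (Fin d) A E2 := by
      rw [hFdef]
      refine Submodule.sum_mem _ (fun b hb => ?_)
      have hble : b ≤ e' • oneExp d := Finset.mem_Iic.mp hb
      by_cases hbd : b.degree = E2
      · exact Submodule.smul_mem _ _ (isHomogeneous_monomial _ hbd)
      · rw [hLam_mon _ (fun hc => hbd ((harith b hble).mp hc)), zero_smul]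
        exact Submodule.zero_mem _
    have hk : (k:ℤ) = -(d:ℤ) - e' := by omega
    have hdeg2 : ((E2:ℕ) : ℤ) = k + d*m := by
      rcases Nat.eq_zero_or_pos d with hd0 | hd1
      · have he0 : e' = 0 := hdz hd0
        have hE20 : E2 = 0 := by rw [hE2def, he0, Nat.zero_mul]
        rw [hE20, hd0]
        simp
        omega
      · rw [hE2def, hmdef]
        push_cast [Nat.cast_sub hd1]
        rw [hk]
        ring
    have hxmem : frac A d F m ∈ LTopDeg A d k :=
      Submodule.subset_span ⟨m, E2, F, hdeg2, hFhom, rfl⟩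
    refine ⟨⟨Submodule.Quotient.mk (frac A d F m),
      Submodule.mem_map.mpr ⟨frac A d F m, hxmem, rfl⟩⟩, ?_⟩
    refine LinearMap.ext fun v => ?_
    obtain ⟨G, hG⟩ := v
    have hGmem' : G ∈ homogeneousSubmodule (Fin d) A e' := by
      have h := hG
      rwa [SDeg, dif_pos hE] at h
    -- left-hand side
    rw [eAux_apply]
    show Pbar A d (Submodule.Quotient.mk (frac A d F m)) G = _
    rw [Pbar_mk, P_frac]
    have hsmul1 : m • oneExp d = oneExp d + e' • oneExp d := by
      rw [hmdef, succ_nsmul, add_comm]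
    rw [prodAll_eq, hsmul1, coeff_monomial_mul, one_mul, MvPolynomial.coeff_mul]
    -- rewrite each summand
    have hterm : ∀ p ∈ Finset.HasAntidiagonal.antidiagonal (e' • oneExp d),
        coeff p.1 G * coeff p.2 F = coeff p.1 G * Lam (monomial p.1 (1:A)) := by
      intro p hp
      have hpsum : p.1 + p.2 = e' • oneExp d := Finset.HasAntidiagonal.mem_antidiagonal.mp hp
      have hple : p.2 ≤ e' • oneExp d := hpsum ▸ le_add_self
      rw [hcoeff p.2, if_pos hple]
      congr 2
      rw [← hpsum, add_tsub_cancel_right]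
    rw [Finset.sum_congr rfl hterm]
    -- right-hand side
    have hcompG : homogeneousComponent e' G = G := by
      rw [homogeneousComponent_of_mem hGmem', if_pos rfl]
    have hlamG : lam ⟨G, hG⟩ = Lam G := by
      rw [hLamdef, LinearMap.comp_apply]
      exact congrArg lam (Subtype.ext (by rw [LinearMap.codRestrict_apply]; exact hcompG.symm))
    rw [hlamG]
    have hGsum : G = ∑ b ∈ Finset.Iic (e' • oneExp d), monomial b (coeff b G) := by
      conv_lhs => rw [G.as_sum]
      refine Finset.sum_subset ?_ ?_
      · intro b hb
        rw [Finset.mem_Iic, Finsupp.le_def]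
        intro j
        have hbd : b.degree = e' := mem_homog_degree A d hGmem' hb
        have hjd := Finsupp.le_degree j b
        simp only [Finsupp.smul_apply, oneExp_apply, smul_eq_mul, mul_one]
        omega
      · intro b _ hbn
        rw [MvPolynomial.notMem_support_iff.mp hbn, map_zero]
    have hLamsum : Lam G = ∑ b ∈ Finset.Iic (e' • oneExp d), coeff b G * Lam (monomial b (1:A)) := by
      conv_lhs => rw [hGsum]
      rw [map_sum]
      refine Finset.sum_congr rfl (fun b _ => ?_)
      rw [show monomial b (coeff b G) = coeff b G • monomial b (1:A) by
        rw [MvPolynomial.smul_monomial, smul_eq_mul, mul_one], map_smul, smul_eq_mul]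
    rw [hLamsum]
    refine Finset.sum_nbij' (fun p => p.1) (fun b => (b, e' • oneExp d - b)) ?_ ?_ ?_ ?_ ?_
    · intro p hp
      have hpsum : p.1 + p.2 = e' • oneExp d := Finset.HasAntidiagonal.mem_antidiagonal.mp hp
      rw [Finset.mem_Iic]
      exact hpsum ▸ le_self_add
    · intro b hb
      rw [Finset.HasAntidiagonal.mem_antidiagonal]
      exact add_tsub_cancel_of_le (Finset.mem_Iic.mp hb)
    · intro p hp
      have hpsum : p.1 + p.2 = e' • oneExp d := Finset.HasAntidiagonal.mem_antidiagonal.mp hp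
      show (p.1, e' • oneExp d - p.1) = p
      rw [← hpsum, add_tsub_cancel_left]
    · intro b hb
      rfl
    · intro p hp
      rfl
theorem top_local_cohomology_iso_graded_dual :
    ∃ e : ∀ k : ℤ, HTopDeg A d k ≃ₗ[A] (SDeg A d (-k - d) →ₗ[A] A),
      -- the degreewise isomorphisms assemble to an isomorphism of graded `S`-modules
      -- `H^d_I(S) ≅ D(S(-d))`, where the (contravariant) `S`-module structure of the graded
      -- dual `D` is `(s·φ)(m) = φ(s·m)`:
      ∀ (i : Fin d) (k : ℤ) (x : TopLocalCohomology A d)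
        (hx : x ∈ HTopDeg A d k) (hx' : (X i : MvPolynomial (Fin d) A) • x ∈ HTopDeg A d (k + 1))
        (G : MvPolynomial (Fin d) A) (hG : G ∈ SDeg A d (-(k + 1) - d))
        (hG' : (X i : MvPolynomial (Fin d) A) * G ∈ SDeg A d (-k - d)),
        e (k + 1) ⟨(X i : MvPolynomial (Fin d) A) • x, hx'⟩ ⟨G, hG⟩ =
          e k ⟨x, hx⟩ ⟨(X i : MvPolynomial (Fin d) A) * G, hG'⟩ := by
  refine ⟨fun k => LinearEquiv.ofBijective (eAux A d k)
    ⟨eAux_injective A d k, eAux_surjective A d k⟩, ?_⟩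
  intro i k x hx hx' G hG hG'
  show eAux A d (k + 1) ⟨_, hx'⟩ ⟨G, hG⟩ = eAux A d k ⟨x, hx⟩ ⟨_, hG'⟩
  rw [eAux_apply, eAux_apply]
  exact Pbar_smul A d (X i) x G

end
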